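/- Let $\lambda\ne0$ and let $\kappa:[0,\infty)\to\mathbb{R}$ solve $(\kappa')^2+F(\kappa)=E$ with $\kappa(0)=0$, where $F(\kappa)=\tfrac14\kappa^4-\tfrac{\lambda^2}{2}\kappa^2$, and let $L(E)=4\int_0^{\kappa_M(E)}\frac{d\kappa}{\sqrt{E-F(\kappa)}}$ for $E>0$. Then $\int_0^{L(E)}\kappa(s)^2\,ds \to \infty$ as $E\to\infty$. -/

import Mathlib

set_option maxHeartbeats 1000000

open Filter Set MeasureTheory intervalIntegral

private lemma aux_sqlt (m z : ℝ) (h : |z| < m) : z ^ 2 < m ^ 2 := by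
  have h1 := abs_nonneg z
  nlinarith [sq_abs z]

private lemma aux_abs (m c z : ℝ) (hc : 0 < c)
    (h : 0 ≤ (m ^ 2 - z ^ 2) * (z ^ 2 + c) / 4) : z ^ 2 ≤ m ^ 2 := by
  have h4 : 0 < z ^ 2 + c := by positivity
  nlinarith [sq_nonneg z]

private lemma aux_pub (m c x : ℝ) (hc0 : 0 < c) (hcm : c ≤ m ^ 2) (hx2 : x ^ 2 ≤ m ^ 2) :
    (m ^ 2 - x ^ 2) * (x ^ 2 + c) / 4 ≤ (m ^ 2) ^ 2 := by
  nlinarith [sq_nonneg x, sq_nonneg m]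

private lemma aux_sq_lb (a z : ℝ) (ha : 0 ≤ a) (h : a ≤ z) : a ^ 2 ≤ z ^ 2 := by nlinarith

lemma key (l E : ℝ) (hE : 0 < E) (y yd : ℝ → ℝ)
    (hderiv : ∀ s, HasDerivAt y (yd s) s)
    (hode : ∀ s, (yd s) ^ 2 + ((y s) ^ 4 / 4 - l ^ 2 / 2 * (y s) ^ 2) = E)
    (h0 : y 0 = 0) (hpos : 0 < yd 0) :
    Real.sqrt (l ^ 2 + Real.sqrt (l ^ 4 + 4 * E)) / 16 ≤
      ∫ s in (0:ℝ)..(4 * ∫ x in (0:ℝ)..Real.sqrt (l ^ 2 + Real.sqrt (l ^ 4 + 4 * E)),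
          1 / Real.sqrt (E - (x ^ 4 / 4 - l ^ 2 / 2 * x ^ 2))), (y s) ^ 2 := by
  set S := Real.sqrt (l ^ 4 + 4 * E) with hSdef
  set m := Real.sqrt (l ^ 2 + S) with hmdef
  have hS0 : 0 ≤ S := Real.sqrt_nonneg _
  have hSsq : S ^ 2 = l ^ 4 + 4 * E := Real.sq_sqrt (by positivity)
  have hm2 : m ^ 2 = l ^ 2 + S := Real.sq_sqrt (by positivity)
  have hSgt : l ^ 2 < S := by nlinarith [sq_nonneg (S - l ^ 2)]
  set c := S - l ^ 2 with hcdef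
  have hc : 0 < c := by rw [hcdef]; linarith
  have hm0 : 0 < m := Real.sqrt_pos.mpr (by nlinarith)
  clear_value S m c
  set P : ℝ → ℝ := fun x => E - (x ^ 4 / 4 - l ^ 2 / 2 * x ^ 2) with hPdef
  show m / 16 ≤ ∫ s in (0:ℝ)..(4 * ∫ x in (0:ℝ)..m, 1 / Real.sqrt (P x)), (y s) ^ 2
  set g : ℝ → ℝ := fun x => 1 / Real.sqrt (P x) with hgdef
  have hgx : ∀ x : ℝ, g x = 1 / Real.sqrt (P x) := fun _ => rfl
  have hPx : ∀ x : ℝ, P x = E - (x ^ 4 / 4 - l ^ 2 / 2 * x ^ 2) := fun _ => rfl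
  have hfac : ∀ x : ℝ, P x = (m ^ 2 - x ^ 2) * (x ^ 2 + c) / 4 := by
    intro x
    rw [hPx, hm2, hcdef]
    linarith [hSsq, sq_nonneg x]
  have hPcont : Continuous P := by
    rw [hPdef]; continuity
  have hycont : Continuous y := continuous_iff_continuousAt.mpr fun s => (hderiv s).continuousAt
  have hPpos : ∀ x : ℝ, x ^ 2 < m ^ 2 → 0 < P x := by
    intro x hx
    rw [hfac]
    have : 0 < x ^ 2 + c := by positivity
    have : 0 < m ^ 2 - x ^ 2 := by linarith
    positivity
  have hgnn : ∀ x, 0 ≤ g x := fun x => by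
    rw [hgdef]; positivity
  have hgpos : ∀ x : ℝ, x ^ 2 < m ^ 2 → 0 < g x := by
    intro x hx
    have h1 := hPpos x hx
    have : 0 < Real.sqrt (P x) := Real.sqrt_pos.mpr h1
    rw [hgdef]; positivity
  have hgcontAt : ∀ x : ℝ, x ^ 2 < m ^ 2 → ContinuousAt g x := by
    intro x hx
    have h1 := hPpos x hx
    have h2 : Real.sqrt (P x) ≠ 0 := ne_of_gt (Real.sqrt_pos.mpr h1)
    exact (continuousAt_const.div ((Real.continuous_sqrt.continuousAt).comp
      hPcont.continuousAt) h2)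
  have hsq_lt : ∀ x : ℝ, -m < x → x < m → x ^ 2 < m ^ 2 := by
    intro x h1 h2
    nlinarith
  have hgmeas : Measurable g := by
    rw [hgdef]
    simp only [one_div]
    exact (Real.continuous_sqrt.measurable.comp hPcont.measurable).inv
  -- interval integrability of g on [0, m]
  have hIntm : IntervalIntegrable g MeasureTheory.volume 0 m := by
    set K := 2 / Real.sqrt (m * c) with hK
    have hKsq : 0 < Real.sqrt (m * c) := Real.sqrt_pos.mpr (by positivity)
    have hdom : IntervalIntegrable (fun x => K * (m - x) ^ (-(1:ℝ)/2))
        MeasureTheory.volume 0 m := by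
      have h1 : IntervalIntegrable (fun x : ℝ => x ^ (-(1:ℝ)/2)) MeasureTheory.volume 0 m :=
        intervalIntegral.intervalIntegrable_rpow' (by norm_num)
      have h2 := h1.comp_sub_left m
      rw [sub_zero, sub_self] at h2
      exact h2.symm.const_mul K
    refine hdom.mono_fun hgmeas.aestronglyMeasurable.restrict ?_
    refine MeasureTheory.ae_restrict_of_forall_mem measurableSet_uIoc ?_
    intro x hx
    rw [Set.uIoc_of_le hm0.le] at hx
    obtain ⟨hx0, hxm⟩ := hx
    have hmx0 : 0 ≤ m - x := by linarith
    have hrpnn : (0:ℝ) ≤ (m - x) ^ (-(1:ℝ)/2) := Real.rpow_nonneg hmx0 _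
    have hrw : (m - x) ^ (-(1:ℝ)/2) = (Real.sqrt (m - x))⁻¹ := by
      rw [show (-(1:ℝ)/2) = -(1/2 : ℝ) by norm_num, Real.rpow_neg hmx0, Real.sqrt_eq_rpow]
    show ‖g x‖ ≤ ‖K * (m - x) ^ (-(1:ℝ)/2)‖
    rw [Real.norm_of_nonneg (hgnn x), Real.norm_of_nonneg (by positivity), hrw]
    rcases eq_or_lt_of_le hxm with heq | hlt
    · have hP0 : P x = 0 := by rw [hfac, heq]; ring
      rw [hgdef]
      simp only [hP0, Real.sqrt_zero, div_zero]
      positivity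
    · have hPxpos : 0 < P x := hPpos x (hsq_lt x (by linarith) hlt)
      have hb : m * c * (m - x) ≤ 4 * P x := by
        rw [hfac]
        have h3 : m * c ≤ (m + x) * (x ^ 2 + c) := by nlinarith [sq_nonneg x]
        have h4 := mul_le_mul_of_nonneg_right h3 hmx0
        calc m * c * (m - x) ≤ (m + x) * (x ^ 2 + c) * (m - x) := h4
          _ = 4 * ((m ^ 2 - x ^ 2) * (x ^ 2 + c) / 4) := by ring
      have h1 : Real.sqrt (m * c) * Real.sqrt (m - x) = Real.sqrt (m * c * (m - x)) :=
        (Real.sqrt_mul (by positivity) _).symm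
      have h2 : Real.sqrt (m * c * (m - x)) ≤ 2 * Real.sqrt (P x) := by
        rw [show (2:ℝ) * Real.sqrt (P x) = Real.sqrt (4 * P x) by
          rw [show (4:ℝ) * P x = 2 ^ 2 * P x by ring, Real.sqrt_mul (by positivity),
            Real.sqrt_sq (by norm_num)]]
        exact Real.sqrt_le_sqrt hb
      have hsx : 0 < Real.sqrt (m - x) := Real.sqrt_pos.mpr (by linarith)
      have hsP : 0 < Real.sqrt (P x) := Real.sqrt_pos.mpr hPxpos
      rw [hgdef]
      show 1 / Real.sqrt (P x) ≤ K * (Real.sqrt (m - x))⁻¹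
      have hre : K * (Real.sqrt (m - x))⁻¹ = 2 / (Real.sqrt (m - x) * Real.sqrt (m * c)) := by
        rw [hK]; field_simp
      rw [hre, div_le_div_iff₀ hsP (by positivity)]
      calc 1 * (Real.sqrt (m - x) * Real.sqrt (m * c))
          = Real.sqrt (m * c) * Real.sqrt (m - x) := by ring
        _ = Real.sqrt (m * c * (m - x)) := h1
        _ ≤ 2 * Real.sqrt (P x) := h2
  -- integrability on strict subintervals
  have hIntsub : ∀ u v : ℝ, -m < u → u ≤ v → v < m →
      IntervalIntegrable g MeasureTheory.volume u v := by
    intro u v h1 h2 h3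
    apply ContinuousOn.intervalIntegrable
    intro x hx
    rw [Set.uIcc_of_le h2] at hx
    exact (hgcontAt x (hsq_lt x (by linarith [hx.1]) (by linarith [hx.2]))).continuousWithinAt
  set G : ℝ → ℝ := fun u => ∫ t in (0:ℝ)..u, g t with hGdef
  have hG' : ∀ x : ℝ, -m < x → x < m → HasDerivAt G (g x) x := by
    intro x h1 h2
    refine intervalIntegral.integral_hasDerivAt_right ?_
      (hgmeas.stronglyMeasurable.stronglyMeasurableAtFilter) (hgcontAt x (hsq_lt x h1 h2))
    rcases le_total 0 x with h | h
    · exact hIntsub 0 x (by linarith) h h2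
    · exact (hIntsub x 0 h1 h hm0).symm
  have hGx : ∀ u, G u = ∫ t in (0:ℝ)..u, g t := fun _ => rfl
  clear_value P g G
  set b : ℝ := 3 * m / 4 with hbdef
  set a : ℝ := m / 2 with hadef
  have hb0 : 0 < b := by rw [hbdef]; linarith
  have hbm : b < m := by rw [hbdef]; linarith
  have ha0 : 0 < a := by rw [hadef]; linarith
  have ham : a < b := by rw [hadef, hbdef]; linarith
  have hPy : ∀ s, P (y s) = yd s ^ 2 := by
    intro s
    rw [hPx]
    linarith [hode s]
  have habs' : ∀ s, |y s| ≤ m := by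
    intro s
    have h2 : 0 ≤ P (y s) := by rw [hPy]; positivity
    rw [hfac] at h2
    have h3 : y s ^ 2 ≤ m ^ 2 := aux_abs m c (y s) hc h2
    rw [← Real.sqrt_sq_eq_abs, ← Real.sqrt_sq hm0.le]
    exact Real.sqrt_le_sqrt h3
  have habs2lt : ∀ u, |y u| < m → y u ^ 2 < m ^ 2 := fun u h => aux_sqlt m (y u) h
  have hstep : ∀ r, 0 ≤ r → (∀ s, 0 ≤ s → s ≤ r → y s ≠ -m ∧ y s < b) →
      ∀ s, 0 ≤ s → s ≤ r → |y s| < m ∧ 0 < yd s := by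
    intro r hr hne
    have habslt : ∀ u, 0 ≤ u → u ≤ r → |y u| < m := by
      intro u h1 h2
      rcases lt_or_eq_of_le (habs' u) with h | h
      · exact h
      · exfalso
        rcases (abs_eq hm0.le).mp h with h3 | h3
        · have := (hne u h1 h2).2; rw [h3] at this; linarith
        · exact (hne u h1 h2).1 h3
    intro s hs hsr
    refine ⟨habslt s hs hsr, ?_⟩
    by_contra hle
    push_neg at hle
    have habs2 : y s ^ 2 < m ^ 2 := habs2lt s (habslt s hs hsr)
    have hP2 : 0 < yd s ^ 2 := by rw [← hPy s]; exact hPpos _ habs2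
    have hne0 : yd s ≠ 0 := by intro h; rw [h] at hP2; simp at hP2
    have hlt0 : yd s < 0 := lt_of_le_of_ne hle hne0
    have hs0 : 0 < s := by
      rcases eq_or_lt_of_le hs with h | h
      · exfalso; rw [← h] at hlt0; linarith
      · exact h
    obtain ⟨u, hu, hu0⟩ := exists_hasDerivWithinAt_eq_of_lt_of_gt hs0.le
      (fun x _ => (hderiv x).hasDerivWithinAt) hpos hlt0
    have h5 : y u ^ 2 < m ^ 2 := habs2lt u (habslt u hu.1.le (le_trans hu.2.le hsr))
    have h6 := hPpos _ h5
    rw [hPy u, hu0] at h6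
    simp at h6
  have hmono' : ∀ r, 0 < r → (∀ s, 0 ≤ s → s < r → |y s| < m ∧ 0 < yd s) →
      StrictMonoOn y (Icc 0 r) := by
    intro r hr h
    apply strictMonoOn_of_deriv_pos (convex_Icc 0 r) hycont.continuousOn
    intro x hx
    rw [interior_Icc] at hx
    rw [(hderiv x).deriv]
    exact (h x hx.1.le hx.2).2
  have hnotneg : ∀ t, 0 ≤ t → (∀ s, 0 ≤ s → s ≤ t → y s < b) →
      ∀ s, 0 ≤ s → s ≤ t → y s ≠ -m := by
    intro t ht hyb
    by_contra hcon
    push_neg at hcon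
    obtain ⟨s₀, hs₀0, hs₀t, hs₀⟩ := hcon
    set W := {s : ℝ | 0 ≤ s ∧ s ≤ t ∧ y s = -m} with hW
    have hWne : W.Nonempty := ⟨s₀, hs₀0, hs₀t, hs₀⟩
    have hWcl : IsClosed W := by
      have hWeq : W = (Icc 0 t) ∩ y ⁻¹' {-m} := by
        ext s; simp [hW, Set.mem_Icc, and_assoc]
      rw [hWeq]
      exact isClosed_Icc.inter (isClosed_singleton.preimage hycont)
    have hWbdd : BddBelow W := ⟨0, fun s hs => hs.1⟩
    set s₂ := sInf W with hs₂def
    have hs₂W : s₂ ∈ W := hWcl.csInf_mem hWne hWbdd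
    have hs₂pos : 0 < s₂ := by
      rcases eq_or_lt_of_le hs₂W.1 with h | h
      · exfalso; have h2 := hs₂W.2.2; rw [← h, h0] at h2; linarith
      · exact h
    have hbefore : ∀ s, 0 ≤ s → s < s₂ → |y s| < m ∧ 0 < yd s := by
      intro s hs hss
      refine hstep s hs (fun u hu1 hu2 => ⟨?_, hyb u hu1 (by linarith [hs₂W.2.1])⟩) s hs le_rfl
      intro hum
      have : s₂ ≤ u := csInf_le hWbdd ⟨hu1, by linarith [hs₂W.2.1], hum⟩
      linarith
    have hsm := hmono' s₂ hs₂pos hbefore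
    have h7 : y 0 < y s₂ := hsm ⟨le_rfl, hs₂pos.le⟩ ⟨hs₂pos.le, le_rfl⟩ hs₂pos
    rw [h0, hs₂W.2.2] at h7
    linarith
  have hkey : ∀ t, 0 ≤ t → (∀ s, 0 ≤ s → s ≤ t → y s < b) →
      ∀ s, 0 ≤ s → s ≤ t → |y s| < m ∧ 0 < yd s := by
    intro t ht hyb
    exact hstep t ht (fun s h1 h2 => ⟨hnotneg t ht hyb s h1 h2, hyb s h1 h2⟩)
  have hclaimEq : ∀ t, 0 ≤ t → (∀ s, 0 ≤ s → s ≤ t → y s < b) → G (y t) = t := by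
    intro t ht hyb
    have hks := hkey t ht hyb
    have hDer : ∀ s ∈ Set.uIcc (0:ℝ) t, HasDerivAt (fun u => G (y u)) 1 s := by
      intro s hs
      rw [Set.uIcc_of_le ht] at hs
      have h1 := hks s hs.1 hs.2
      obtain ⟨hl1, hl2⟩ := abs_lt.mp h1.1
      have hGd : HasDerivAt G (g (y s)) (y s) := hG' (y s) hl1 hl2
      have h2 := hGd.comp s (hderiv s)
      have h3 : g (y s) * yd s = 1 := by
        rw [hgx, hPy s, Real.sqrt_sq h1.2.le, one_div, inv_mul_cancel₀ h1.2.ne' ]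
      rw [h3] at h2
      exact h2
    have hint1 : IntervalIntegrable (fun _ : ℝ => (1:ℝ)) MeasureTheory.volume 0 t :=
      intervalIntegrable_const
    have heq := intervalIntegral.integral_eq_sub_of_hasDerivAt hDer hint1
    rw [h0] at heq
    have hG0 : G 0 = 0 := by rw [hGx]; exact intervalIntegral.integral_same
    rw [hG0] at heq
    simp at heq
    linarith [heq]
  have hclaimLe : ∀ t, 0 ≤ t → (∀ s, 0 ≤ s → s ≤ t → y s < b) → t ≤ G b := by
    intro t ht hyb
    have heq := hclaimEq t ht hyb
    have hyt0 : 0 ≤ y t := by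
      rcases eq_or_lt_of_le ht with h | h
      · rw [← h, h0]
      · have hks := hkey t ht hyb
        have hsm := hmono' t h (fun s hs hst => hks s hs hst.le)
        have h7 : y 0 < y t := hsm ⟨le_rfl, h.le⟩ ⟨h.le, le_rfl⟩ h
        rw [h0] at h7
        linarith
    have hytb : y t ≤ b := (hyb t ht le_rfl).le
    have hint1 : IntervalIntegrable g MeasureTheory.volume 0 (y t) :=
      hIntsub 0 (y t) (by linarith) hyt0 (by linarith)
    have hint2 : IntervalIntegrable g MeasureTheory.volume (y t) b :=
      hIntsub (y t) b (by linarith) hytb hbm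
    have hadd := intervalIntegral.integral_add_adjacent_intervals hint1 hint2
    have hnn : 0 ≤ ∫ x in (y t)..b, g x :=
      intervalIntegral.integral_nonneg hytb (fun u _ => hgnn u)
    have hGle : G (y t) ≤ G b := by
      rw [hGx (y t), hGx b]
      linarith [hadd, hnn]
    linarith [heq, hGle]
  set T := 4 * ∫ x in (0:ℝ)..m, g x with hTdef
  have hGb_le : G b ≤ (∫ x in (0:ℝ)..m, g x) := by
    rw [hGx]
    exact intervalIntegral.integral_mono_interval le_rfl hb0.le hbm.le
      (Filter.Eventually.of_forall hgnn) hIntm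
  have hGbpos : 0 < G b := by
    rw [hGx]
    exact intervalIntegral_pos_of_pos_on (hIntsub 0 b (by linarith) hb0.le hbm)
      (fun x hx => hgpos x (hsq_lt x (by linarith [hx.1]) (by linarith [hx.2]))) hb0
  have hT4 : 4 * G b ≤ T := by rw [hTdef]; linarith
  have hTpos : 0 < T := by linarith
  have hhit : ∃ s₀, 0 ≤ s₀ ∧ s₀ ≤ T ∧ b ≤ y s₀ := by
    by_contra hcon
    push_neg at hcon
    have := hclaimLe T hTpos.le (fun s h1 h2 => hcon s h1 h2)
    linarith
  obtain ⟨s₀, hs₀0, hs₀T, hs₀b⟩ := hhit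
  have hIVT : ∃ t', t' ∈ Icc 0 s₀ ∧ y t' = b := by
    have h1 : b ∈ Icc (y 0) (y s₀) := by rw [h0]; exact ⟨hb0.le, hs₀b⟩
    obtain ⟨t', ht', hyt'⟩ := intermediate_value_Icc hs₀0 hycont.continuousOn h1
    exact ⟨t', ht', hyt'⟩
  obtain ⟨t', ht'mem, hyt'⟩ := hIVT
  set W := {s : ℝ | 0 ≤ s ∧ y s = b} with hWdef
  have hWne : W.Nonempty := ⟨t', ht'mem.1, hyt'⟩
  have hWcl : IsClosed W := by
    have hWeq : W = (Ici 0) ∩ y ⁻¹' {b} := by ext s; simp [hWdef]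
    rw [hWeq]
    exact isClosed_Ici.inter (isClosed_singleton.preimage hycont)
  have hWbdd : BddBelow W := ⟨0, fun s hs => hs.1⟩
  set tb := sInf W with htbdef
  have htbW : tb ∈ W := hWcl.csInf_mem hWne hWbdd
  have htbT : tb ≤ T := le_trans (le_trans (csInf_le hWbdd ⟨ht'mem.1, hyt'⟩) ht'mem.2) hs₀T
  have htbpos : 0 < tb := by
    rcases eq_or_lt_of_le htbW.1 with h | h
    · exfalso; have h2 := htbW.2; rw [← h, h0] at h2; linarith
    · exact h
  have hbef : ∀ s, 0 ≤ s → s < tb → y s < b := by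
    intro s hs hstb
    by_contra hge
    push_neg at hge
    have h1 : b ∈ Icc (y 0) (y s) := by rw [h0]; exact ⟨hb0.le, hge⟩
    obtain ⟨t'', ht''mem, hyt''⟩ := intermediate_value_Icc hs hycont.continuousOn h1
    have : tb ≤ t'' := csInf_le hWbdd ⟨ht''mem.1, hyt''⟩
    linarith [ht''mem.2]
  have heqlt : ∀ s, 0 ≤ s → s < tb → G (y s) = s := fun s h1 h2 =>
    hclaimEq s h1 (fun u hu1 hu2 => hbef u hu1 (lt_of_le_of_lt hu2 h2))
  have hGcb : ContinuousAt G b := (hG' b (by linarith) hbm).continuousAt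
  have hcomp : ContinuousAt (fun s => G (y s)) tb := by
    have := ContinuousAt.comp (x := tb) (g := G) (f := y) (by rw [htbW.2]; exact hGcb)
      hycont.continuousAt
    exact this
  have h1t : Filter.Tendsto (fun s => G (y s)) (nhdsWithin tb (Iio tb)) (nhds (G (y tb))) :=
    hcomp.tendsto.mono_left nhdsWithin_le_nhds
  have h2t : Filter.Tendsto (fun s => G (y s)) (nhdsWithin tb (Iio tb)) (nhds tb) := by
    apply Filter.Tendsto.congr' ?_ ((continuous_id.tendsto tb).mono_left nhdsWithin_le_nhds)
    filter_upwards [Ioo_mem_nhdsLT_of_mem (⟨htbpos, le_rfl⟩ : tb ∈ Ioc 0 tb)] with s hs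
    exact (heqlt s hs.1.le hs.2).symm
  have hGbtb : G b = tb := by
    have h3 := tendsto_nhds_unique h1t h2t
    rw [htbW.2] at h3
    exact h3
  have hIVTa : ∃ ta, ta ∈ Icc 0 tb ∧ y ta = a := by
    have h1 : a ∈ Icc (y 0) (y tb) := by rw [h0, htbW.2]; exact ⟨ha0.le, ham.le⟩
    obtain ⟨ta, hta, hyta⟩ := intermediate_value_Icc htbW.1 hycont.continuousOn h1
    exact ⟨ta, hta, hyta⟩
  obtain ⟨ta, ⟨hta0, htatb⟩, hyta⟩ := hIVTa
  have htalt : ta < tb := by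
    rcases eq_or_lt_of_le htatb with h | h
    · exfalso; rw [h, htbW.2] at hyta; linarith
    · exact h
  have hGata : G a = ta := by rw [← hyta]; exact heqlt ta hta0 htalt
  have hksb : ∀ s, 0 ≤ s → s < tb → |y s| < m ∧ 0 < yd s := fun s h1 h2 =>
    hkey s h1 (fun u hu1 hu2 => hbef u hu1 (by linarith)) s h1 le_rfl
  have hmonotb : StrictMonoOn y (Icc 0 tb) := hmono' tb htbpos hksb
  have hylb : ∀ s, ta ≤ s → s ≤ tb → a ≤ y s := by
    intro s h1 h2
    rw [← hyta]
    exact hmonotb.monotoneOn ⟨hta0, htatb⟩ ⟨le_trans hta0 h1, h2⟩ h1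
  have hy2int : ∀ u v : ℝ, IntervalIntegrable (fun s => (y s) ^ 2) MeasureTheory.volume u v :=
    fun u v => ((hycont.pow 2).intervalIntegrable u v)
  have hsplit1 := intervalIntegral.integral_add_adjacent_intervals (μ := MeasureTheory.volume)
    (hy2int 0 ta) (hy2int ta tb)
  have hsplit2 := intervalIntegral.integral_add_adjacent_intervals (μ := MeasureTheory.volume)
    (hy2int 0 tb) (hy2int tb T)
  have hnn1 : 0 ≤ ∫ s in (0:ℝ)..ta, (y s) ^ 2 :=
    intervalIntegral.integral_nonneg hta0 (fun u _ => sq_nonneg _)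
  have hnn2 : 0 ≤ ∫ s in tb..T, (y s) ^ 2 :=
    intervalIntegral.integral_nonneg htbT (fun u _ => sq_nonneg _)
  have hmid : a ^ 2 * (tb - ta) ≤ ∫ s in ta..tb, (y s) ^ 2 := by
    have h4 := intervalIntegral.integral_mono_on (μ := MeasureTheory.volume)
      (f := fun _ : ℝ => a ^ 2) (g := fun s => (y s) ^ 2) htalt.le
      intervalIntegrable_const (hy2int ta tb)
      (fun s hs => aux_sq_lb a (y s) ha0.le (hylb s hs.1 hs.2))
    rw [intervalIntegral.integral_const] at h4
    calc a ^ 2 * (tb - ta) = (tb - ta) • (a ^ 2) := by rw [smul_eq_mul]; ring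
      _ ≤ ∫ s in ta..tb, (y s) ^ 2 := h4
  have hadj := intervalIntegral.integral_add_adjacent_intervals
    (hIntsub 0 a (by linarith) ha0.le (by linarith)) (hIntsub a b (by linarith) ham.le hbm)
  have hgap : tb - ta = ∫ x in a..b, g x := by
    rw [← hGbtb, ← hGata, hGx a, hGx b]
    linarith [hadj]
  have hglb : ∀ x ∈ Icc a b, 1 / m ^ 2 ≤ g x := by
    intro x hx
    have hx2 : x ^ 2 < m ^ 2 := hsq_lt x (by linarith [hx.1]) (by linarith [hx.2])
    have hPxpos := hPpos x hx2
    have hcm : c ≤ m ^ 2 := by rw [hm2, hcdef]; linarith [sq_nonneg l]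
    have hPub : P x ≤ (m ^ 2) ^ 2 := by
      rw [hfac]
      exact aux_pub m c x hc hcm hx2.le
    have h2 : Real.sqrt (P x) ≤ m ^ 2 := by
      calc Real.sqrt (P x) ≤ Real.sqrt ((m ^ 2) ^ 2) := Real.sqrt_le_sqrt hPub
        _ = m ^ 2 := Real.sqrt_sq (by positivity)
    rw [hgx]
    exact one_div_le_one_div_of_le (Real.sqrt_pos.mpr hPxpos) h2
  have hgaplb : (b - a) * (1 / m ^ 2) ≤ ∫ x in a..b, g x := by
    have h4 := intervalIntegral.integral_mono_on (μ := MeasureTheory.volume)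
      (f := fun _ : ℝ => 1 / m ^ 2) ham.le
      intervalIntegrable_const (hIntsub a b (by linarith) ham.le hbm) hglb
    rw [intervalIntegral.integral_const] at h4
    calc (b - a) * (1 / m ^ 2) = (b - a) • (1 / m ^ 2) := by rw [smul_eq_mul]
      _ ≤ ∫ x in a..b, g x := h4
  have hfinal : m / 16 ≤ a ^ 2 * (tb - ta) := by
    have h1 : (b - a) * (1 / m ^ 2) ≤ tb - ta := by rw [hgap]; exact hgaplb
    have h2 : a ^ 2 * ((b - a) * (1 / m ^ 2)) ≤ a ^ 2 * (tb - ta) :=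
      mul_le_mul_of_nonneg_left h1 (sq_nonneg a)
    have h3 : m / 16 = a ^ 2 * ((b - a) * (1 / m ^ 2)) := by
      rw [hadef, hbdef]
      field_simp
      ring
    linarith
  calc m / 16 ≤ a ^ 2 * (tb - ta) := hfinal
    _ ≤ ∫ s in ta..tb, (y s) ^ 2 := hmid
    _ ≤ ∫ s in (0:ℝ)..T, (y s) ^ 2 := by linarith [hsplit1, hsplit2, hnn1, hnn2]

/-- Lemma 3.1 of the paper: Let `λ ≠ 0`, `F(κ) = κ⁴/4 - λ²κ²/2`, and for
each `E > 0` let `κ(E, ·)` solve `(κ')² + F(κ) = E` with `κ(E, 0) = 0`. With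
`L(E) = 4∫₀^{κ_M(E)} dκ/√(E - F(κ))`, the quantity `∫₀^{L(E)} κ(E,s)² ds` tends to `∞`
as `E → ∞`. -/
theorem squared_curvature_integral_diverges (l : ℝ) (hl : l ≠ 0)
    (F : ℝ → ℝ) (hF : ∀ x, F x = x ^ 4 / 4 - l ^ 2 / 2 * x ^ 2)
    (κ κ' : ℝ → ℝ → ℝ)
    (hderiv : ∀ E : ℝ, 0 < E → ∀ s : ℝ, HasDerivAt (κ E) (κ' E s) s)
    (hode : ∀ E : ℝ, 0 < E → ∀ s : ℝ, (κ' E s) ^ 2 + F (κ E s) = E)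
    (hinit : ∀ E : ℝ, 0 < E → κ E 0 = 0) :
    Tendsto (fun E : ℝ =>
        ∫ s in (0 : ℝ)..(4 * ∫ x in (0 : ℝ)..(Real.sqrt (l ^ 2 + Real.sqrt (l ^ 4 + 4 * E))),
            1 / Real.sqrt (E - F x)), (κ E s) ^ 2)
      atTop atTop := by
  have hbnd : ∀ E : ℝ, 1 ≤ E →
      E ^ ((1:ℝ)/4) / 16 ≤
        ∫ s in (0 : ℝ)..(4 * ∫ x in (0 : ℝ)..(Real.sqrt (l ^ 2 + Real.sqrt (l ^ 4 + 4 * E))),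
            1 / Real.sqrt (E - F x)), (κ E s) ^ 2 := by
    intro E hE1
    have hE : 0 < E := by linarith
    simp only [hF]
    have hEq : Real.sqrt (Real.sqrt E) = E ^ ((1:ℝ)/4) := by
      rw [Real.sqrt_eq_rpow E, Real.sqrt_eq_rpow, ← Real.rpow_mul hE.le]
      norm_num
    have hm_ge : E ^ ((1:ℝ)/4) ≤ Real.sqrt (l ^ 2 + Real.sqrt (l ^ 4 + 4 * E)) := by
      rw [← hEq]
      apply Real.sqrt_le_sqrt
      have h1 : Real.sqrt E ≤ Real.sqrt (l ^ 4 + 4 * E) :=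
        Real.sqrt_le_sqrt (by nlinarith [sq_nonneg (l ^ 2)])
      linarith [sq_nonneg l]
    have hd2 : (κ' E 0) ^ 2 = E := by
      have h := hode E hE 0
      rw [hinit E hE, hF] at h
      norm_num at h
      exact h
    have hdne : κ' E 0 ≠ 0 := by
      intro h
      rw [h] at hd2
      simp at hd2
      linarith
    rcases lt_or_gt_of_ne hdne with hneg | hpos
    · have hkey := key l E hE (fun s => -(κ E s)) (fun s => -(κ' E s))
        (fun s => (hderiv E hE s).neg)
        (fun s => by
          have h := hode E hE s
          rw [hF] at h
          ring_nf
          ring_nf at h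
          linarith)
        (by simp [hinit E hE]) (by simpa using neg_pos.mpr hneg)
      simp only [neg_sq] at hkey
      linarith [hm_ge, hkey]
    · have hkey := key l E hE (κ E) (κ' E) (hderiv E hE)
        (fun s => by
          have h := hode E hE s
          rw [hF] at h
          linarith)
        (hinit E hE) hpos
      linarith [hm_ge, hkey]
  have htend : Tendsto (fun E : ℝ => E ^ ((1:ℝ)/4) / 16) atTop atTop :=
    (tendsto_rpow_atTop (by norm_num : (0:ℝ) < 1/4)).atTop_div_const (by norm_num)
  refine tendsto_atTop_mono' atTop ?_ htend
  filter_upwards [eventually_ge_atTop (1:ℝ)] with E hE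
  exact hbnd E hE
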